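/- Let M be a 2m×k complex matrix with Mᵀ·M = I_k and N a 2m×n complex matrix with Nᵀ·N = I_n, and set U = (2·M·Mᵀ − I)·(2·N·Nᵀ − I). Then (λ−1)^{n+k}·(λ+1)^{k}·det(λ·I_{2m} − U) = (λ−1)^{2m}·(λ+1)^{n}·det((λ+1)²·I_k − 4λ·Mᵀ·N·Nᵀ·M) for all λ : ℂ. -/

import Mathlib

open Matrix Polynomial

private theorem vfw_key (m n k : ℕ)
    (M : Matrix (Fin (2 * m)) (Fin k) ℂ) (N : Matrix (Fin (2 * m)) (Fin n) ℂ)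
    (hM : Mᵀ * M = 1) (hN : Nᵀ * N = 1) (lam : ℂ) (h1 : lam ≠ 1) (h2 : lam ≠ -1) :
    (lam - 1) ^ (n + k) * (lam + 1) ^ k *
      (lam • (1 : Matrix (Fin (2 * m)) (Fin (2 * m)) ℂ)
        - (2 • (M * Mᵀ) - 1) * (2 • (N * Nᵀ) - 1)).det
      = (lam - 1) ^ (2 * m) * (lam + 1) ^ n *
        ((lam + 1) ^ 2 • (1 : Matrix (Fin k) (Fin k) ℂ) - (4 * lam) • (Mᵀ * N * Nᵀ * M)).det := by
  have hc : lam - 1 ≠ 0 := sub_ne_zero.mpr h1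
  have hu : lam + 1 ≠ 0 := by intro h; apply h2; linear_combination h
  have hsmulP : (2:ℕ) • (M * Mᵀ) = (2:ℂ) • (M * Mᵀ) := by ext i j; simp
  have hsmulQ : (2:ℕ) • (N * Nᵀ) = (2:ℂ) • (N * Nᵀ) := by ext i j; simp
  rw [hsmulP, hsmulQ]
  set P : Matrix (Fin (2*m)) (Fin (2*m)) ℂ := M * Mᵀ with hP
  set Q : Matrix (Fin (2*m)) (Fin (2*m)) ℂ := N * Nᵀ with hQ
  set R : Matrix (Fin (2*m)) (Fin (2*m)) ℂ := (2:ℂ) • P - 1 with hR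
  set S : Matrix (Fin (2*m)) (Fin (2*m)) ℂ := (2:ℂ) • Q - 1 with hS
  have hQQ : Q * Q = Q := by
    rw [hQ, Matrix.mul_assoc, ← Matrix.mul_assoc Nᵀ, hN, Matrix.one_mul]
  have hSS : S * S = 1 := by
    rw [hS]
    simp only [Matrix.sub_mul, Matrix.mul_sub, Matrix.smul_mul, Matrix.mul_smul,
      Matrix.one_mul, Matrix.mul_one, smul_smul, hQQ]
    module
  -- Step 1
  have e1 : lam • (1:Matrix (Fin (2*m)) (Fin (2*m)) ℂ) - R * S = (lam • S - R) * S := by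
    conv_rhs => rw [Matrix.sub_mul, Matrix.smul_mul, hSS]
  have e2 : S.det = (-1:ℂ)^n := by
    have hS' : S = (-1:ℂ) • (1 - N * ((2:ℂ) • Nᵀ)) := by
      rw [hS, hQ, neg_smul, one_smul, neg_sub, Matrix.mul_smul]
    rw [hS', Matrix.det_smul, Matrix.det_one_sub_mul_comm, Matrix.smul_mul, hN]
    have h21 : (1:Matrix (Fin n) (Fin n) ℂ) - (2:ℂ) • 1 = (-1:ℂ) • 1 := by module
    rw [h21, Matrix.det_smul, Matrix.det_one]
    simp [Fintype.card_fin, pow_mul]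
  have step1 : (lam • (1:Matrix (Fin (2*m)) (Fin (2*m)) ℂ) - R * S).det
      = (lam • S - R).det * (-1:ℂ)^n := by
    rw [e1, Matrix.det_mul, e2]
  -- Step 2: lam • S - R = -((lam-1) • 1 + A * B)
  set A : Matrix (Fin (2*m)) (Fin n ⊕ Fin k) ℂ := fromCols N M with hA
  set B : Matrix (Fin n ⊕ Fin k) (Fin (2*m)) ℂ :=
    fromRows ((-2*lam) • Nᵀ) ((2:ℂ) • Mᵀ) with hB
  have hAB : A * B = (-2*lam) • Q + (2:ℂ) • P := by
    rw [hA, hB, fromCols_mul_fromRows, Matrix.mul_smul, Matrix.mul_smul, hQ, hP]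
  have step2 : lam • S - R = -((lam - 1) • 1 + A * B) := by
    rw [hAB, hS, hR]
    module
  have step2' : (lam • S - R).det = ((lam - 1) • (1:Matrix (Fin (2*m)) (Fin (2*m)) ℂ) + A * B).det := by
    rw [step2, Matrix.det_neg, Fintype.card_fin, pow_mul]
    simp
  -- Step 3: Weinstein-Aronszajn with scaling
  have step3 : (lam-1)^(n+k) * ((lam - 1) • (1:Matrix (Fin (2*m)) (Fin (2*m)) ℂ) + A * B).det
      = (lam-1)^(2*m) * ((lam - 1) • (1:Matrix (Fin n ⊕ Fin k) (Fin n ⊕ Fin k) ℂ) + B * A).det := by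
    have wa := Matrix.det_one_add_mul_comm ((lam-1)⁻¹ • A) B
    have l1 : (lam-1) • ((1:Matrix (Fin (2*m)) (Fin (2*m)) ℂ) + ((lam-1)⁻¹ • A) * B)
        = (lam - 1) • 1 + A * B := by
      rw [Matrix.smul_mul, smul_add, smul_smul, mul_inv_cancel₀ hc, one_smul]
    have l2 : (lam-1) • ((1:Matrix (Fin n ⊕ Fin k) (Fin n ⊕ Fin k) ℂ) + B * ((lam-1)⁻¹ • A))
        = (lam - 1) • 1 + B * A := by
      rw [Matrix.mul_smul, smul_add, smul_smul, mul_inv_cancel₀ hc, one_smul]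
    rw [← l1, ← l2, Matrix.det_smul, Matrix.det_smul, Fintype.card_fin, Fintype.card_sum,
      Fintype.card_fin, Fintype.card_fin, wa]
    ring
  -- Step 4: block structure and Schur complement
  have hBA : (lam - 1) • (1 : Matrix (Fin n ⊕ Fin k) (Fin n ⊕ Fin k) ℂ) + B * A
      = fromBlocks ((-(lam+1)) • 1) ((-2*lam) • (Nᵀ * M)) ((2:ℂ) • (Mᵀ * N)) ((lam+1) • 1) := by
    rw [hA, hB, fromRows_mul_fromCols]
    simp only [Matrix.smul_mul, hN, hM]
    ext (i|i) (j|j) <;>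
      simp [Matrix.one_apply, Matrix.add_apply, Matrix.smul_apply] <;>
      try split_ifs <;> try ring
  have invu : (-(lam+1)) ≠ 0 := neg_ne_zero.mpr hu
  letI : Invertible ((-(lam+1)) • (1 : Matrix (Fin n) (Fin n) ℂ)) :=
    ⟨(-(lam+1))⁻¹ • 1,
     by rw [smul_mul_smul_comm, Matrix.one_mul, inv_mul_cancel₀ invu, one_smul],
     by rw [smul_mul_smul_comm, Matrix.one_mul, mul_inv_cancel₀ invu, one_smul]⟩
  have step4a : ((lam - 1) • (1 : Matrix (Fin n ⊕ Fin k) (Fin n ⊕ Fin k) ℂ) + B * A).det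
      = (-(lam+1))^n * ((lam+1) • (1 : Matrix (Fin k) (Fin k) ℂ)
          - (4*lam*(lam+1)⁻¹) • (Mᵀ * N * Nᵀ * M)).det := by
    rw [hBA, Matrix.det_fromBlocks₁₁]
    congr 1
    · rw [Matrix.det_smul, Matrix.det_one, Fintype.card_fin, mul_one]
    · congr 1
      have hinv : ⅟((-(lam+1)) • (1 : Matrix (Fin n) (Fin n) ℂ)) = (-(lam+1))⁻¹ • 1 := rfl
      rw [hinv]
      simp only [Matrix.smul_mul, Matrix.mul_smul, Matrix.mul_one, smul_smul]
      rw [show Mᵀ * N * (Nᵀ * M) = Mᵀ * N * Nᵀ * M from (Matrix.mul_assoc _ _ _).symm]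
      congr 1
      rw [inv_neg]
      field_simp
      ring
  have step4b : (lam+1)^k * ((lam+1) • (1 : Matrix (Fin k) (Fin k) ℂ)
          - (4*lam*(lam+1)⁻¹) • (Mᵀ * N * Nᵀ * M)).det
      = ((lam + 1) ^ 2 • (1 : Matrix (Fin k) (Fin k) ℂ) - (4 * lam) • (Mᵀ * N * Nᵀ * M)).det := by
    have hfac : (lam+1) • ((lam+1) • (1 : Matrix (Fin k) (Fin k) ℂ)
          - (4*lam*(lam+1)⁻¹) • (Mᵀ * N * Nᵀ * M))
        = (lam + 1) ^ 2 • (1 : Matrix (Fin k) (Fin k) ℂ) - (4 * lam) • (Mᵀ * N * Nᵀ * M) := by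
      rw [smul_sub, smul_smul, smul_smul, ← pow_two]
      congr 2
      field_simp
    rw [← hfac, Matrix.det_smul, Fintype.card_fin]
  -- Final assembly
  have hneg : ((-1:ℂ))^n * (-1)^n = 1 := by rw [← mul_pow]; norm_num
  generalize hDgen : ((lam + 1) ^ 2 • (1 : Matrix (Fin k) (Fin k) ℂ)
      - (4 * lam) • (Mᵀ * N * Nᵀ * M)).det = Dv at step4b ⊢
  generalize hSgen : ((lam + 1) • (1 : Matrix (Fin k) (Fin k) ℂ)
      - (4*lam*(lam+1)⁻¹) • (Mᵀ * N * Nᵀ * M)).det = dSchur at step4a step4b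
  generalize hBAgen : ((lam - 1) • (1 : Matrix (Fin n ⊕ Fin k) (Fin n ⊕ Fin k) ℂ) + B * A).det
      = dBA at step3 step4a
  generalize hABgen : ((lam - 1) • (1 : Matrix (Fin (2*m)) (Fin (2*m)) ℂ) + A * B).det
      = dAB at step2' step3
  generalize hRSgen : (lam • S - R).det = dRS at step1 step2'
  generalize hd1gen : (lam • (1 : Matrix (Fin (2*m)) (Fin (2*m)) ℂ) - R * S).det = d1 at step1 ⊢
  have e3 : (lam-1)^(n+k) * dAB = (lam-1)^(2*m) * ((-1:ℂ)^n * (lam+1)^n * dSchur) := by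
    rw [step3, step4a, neg_pow]; try ring
  rw [step1, step2', ← step4b]
  linear_combination ((lam+1)^k * (-1:ℂ)^n) * e3
    + ((lam-1)^(2*m) * (lam+1)^n * (lam+1)^k * dSchur) * hneg

theorem vertex_face_walk_charpoly (m n k : ℕ)
    (M : Matrix (Fin (2 * m)) (Fin k) ℂ) (N : Matrix (Fin (2 * m)) (Fin n) ℂ)
    (hM : Mᵀ * M = 1) (hN : Nᵀ * N = 1) (lam : ℂ) :
    (lam - 1) ^ (n + k) * (lam + 1) ^ k *
      (lam • (1 : Matrix (Fin (2 * m)) (Fin (2 * m)) ℂ)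
        - (2 • (M * Mᵀ) - 1) * (2 • (N * Nᵀ) - 1)).det
      = (lam - 1) ^ (2 * m) * (lam + 1) ^ n *
        ((lam + 1) ^ 2 • (1 : Matrix (Fin k) (Fin k) ℂ) - (4 * lam) • (Mᵀ * N * Nᵀ * M)).det := by
  set U : Matrix (Fin (2 * m)) (Fin (2 * m)) ℂ := (2 • (M * Mᵀ) - 1) * (2 • (N * Nᵀ) - 1) with hU
  set G : Matrix (Fin k) (Fin k) ℂ := Mᵀ * N * Nᵀ * M with hG
  set p : ℂ[X] := (X - 1) ^ (n + k) * (X + 1) ^ k *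
      ((X : ℂ[X]) • (1 : Matrix (Fin (2 * m)) (Fin (2 * m)) ℂ[X]) - U.map C).det with hp
  set q : ℂ[X] := (X - 1) ^ (2 * m) * (X + 1) ^ n *
      (((X : ℂ[X]) + 1) ^ 2 • (1 : Matrix (Fin k) (Fin k) ℂ[X]) - (C (4:ℂ) * X) • G.map C).det
    with hq
  have hpe : ∀ x : ℂ, p.eval x = (x - 1) ^ (n + k) * (x + 1) ^ k *
      (x • (1 : Matrix (Fin (2 * m)) (Fin (2 * m)) ℂ) - U).det := by
    intro x
    rw [hp]
    simp only [eval_mul, eval_pow, eval_sub, eval_add, eval_one, eval_X]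
    congr 1
    rw [← Polynomial.coe_evalRingHom, RingHom.map_det]
    congr 1
    ext i j
    simp [Matrix.sub_apply, Matrix.smul_apply, Matrix.one_apply, Matrix.map_apply, apply_ite,
      smul_eq_mul]
  have hqe : ∀ x : ℂ, q.eval x = (x - 1) ^ (2 * m) * (x + 1) ^ n *
      ((x + 1) ^ 2 • (1 : Matrix (Fin k) (Fin k) ℂ) - (4 * x) • G).det := by
    intro x
    rw [hq]
    simp only [eval_mul, eval_pow, eval_sub, eval_add, eval_one, eval_X]
    congr 1
    rw [← Polynomial.coe_evalRingHom, RingHom.map_det]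
    congr 1
    ext i j
    simp [Matrix.sub_apply, Matrix.smul_apply, Matrix.one_apply, Matrix.map_apply, apply_ite,
      smul_eq_mul]
  have hpq : p = q := by
    apply Polynomial.eq_of_infinite_eval_eq
    apply Set.Infinite.mono (s := ({1, -1} : Set ℂ)ᶜ)
    · intro x hx
      simp only [Set.mem_compl_iff, Set.mem_insert_iff, Set.mem_singleton_iff, not_or] at hx
      simp only [Set.mem_setOf_eq]
      rw [hpe, hqe, hU, hG]
      exact vfw_key m n k M N hM hN x hx.1 hx.2
    · exact Set.Finite.infinite_compl (by simp)
  have := congrArg (Polynomial.eval lam) hpq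
  rwa [hpe, hqe] at this
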